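/- Let p and q be probability distributions (finite or countable sequences of nonincreasing nonnegative values summing to 1) with finite entropy, and let α > 0. If p ≼_α q (p is α-strongly majorized by q), then H(q) ≤ H(p) − log₂(α). -/

import Mathlib

set_option maxHeartbeats 1000000


open Finset Real

/-- Additivity of interval-intersection length: the length of `[a,b) ∩ [c,d)`
plus the length of `[a,b) ∩ [d,e)` equals the length of `[a,b) ∩ [c,e)`. -/
private lemma ilen_add (a b c d e : ℝ) (hcd : c ≤ d) (hde : d ≤ e) :
    max 0 (min b d - max a c) + max 0 (min b e - max a d)
      = max 0 (min b e - max a c) := by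
  rcases le_total b d with h | h
  · have h1 : min b d = b := min_eq_left h
    have h2 : min b e = b := min_eq_left (h.trans hde)
    have h3 : max 0 (b - max a d) = 0 :=
      max_eq_left (sub_nonpos.mpr (h.trans (le_max_right a d)))
    rw [h1, h2, h3, add_zero]
  · rcases le_total a d with h' | h'
    · have h1 : min b d = d := min_eq_right h
      have h2 : max a d = d := max_eq_right h'
      have h3 : max a c ≤ d := max_le h' hcd
      have h4 : d ≤ min b e := le_min h hde
      have h5 : min b e ≤ b := min_le_left _ _
      rw [h1, h2,
        max_eq_right (show (0:ℝ) ≤ d - max a c by linarith),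
        max_eq_right (show (0:ℝ) ≤ min b e - d by linarith),
        max_eq_right (show (0:ℝ) ≤ min b e - max a c by linarith)]
      ring
    · have h2 : max a d = a := max_eq_left h'
      have h3 : max a c = a := max_eq_left (hcd.trans h')
      have h4 : min b d - a ≤ 0 := by
        have := min_le_right b d; linarith
      rw [h2, h3, max_eq_left h4, zero_add]

/-- Summing the lengths of intersections of a fixed interval `[c,d) ⊆ [0,1)`
with the consecutive intervals `[P n, P (n+1))` of a partition of `[0,1)`
gives the total length `d - c`. -/
private lemma hasSum_slice (P : ℕ → ℝ) (c d : ℝ)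
    (hP0 : P 0 = 0) (hmono : Monotone P)
    (hlim : Filter.Tendsto P Filter.atTop (nhds 1))
    (hc : 0 ≤ c) (hcd : c ≤ d) (hd1 : d ≤ 1) :
    HasSum (fun n => max 0 (min d (P (n + 1)) - max c (P n))) (d - c) := by
  have hP0' : ∀ n, 0 ≤ P n := fun n => hP0 ▸ hmono (Nat.zero_le n)
  have hd0 : 0 ≤ d := hc.trans hcd
  have key : ∀ N, ∑ n ∈ Finset.range N, max 0 (min d (P (n + 1)) - max c (P n))
      = max 0 (min d (P N) - c) := by
    intro N
    induction N with
    | zero =>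
        simp only [Finset.range_zero, Finset.sum_empty, hP0, min_eq_right hd0]
        rw [max_eq_left (by linarith)]
    | succ N ih =>
        rw [Finset.sum_range_succ, ih]
        have h := ilen_add c d 0 (P N) (P (N + 1)) (hP0' N) (hmono (Nat.le_succ N))
        rwa [max_eq_left hc] at h
  have hnn : ∀ n, 0 ≤ max 0 (min d (P (n + 1)) - max c (P n)) :=
    fun n => le_max_left _ _
  have hbd : ∀ N, ∑ n ∈ Finset.range N, max 0 (min d (P (n + 1)) - max c (P n))
      ≤ d - c := by
    intro N
    rw [key N]
    exact max_le (by linarith) (by have := min_le_left d (P N); linarith)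
  have hsummable : Summable fun n => max 0 (min d (P (n + 1)) - max c (P n)) :=
    summable_of_sum_range_le hnn hbd
  rw [hsummable.hasSum_iff_tendsto_nat]
  have h1 : Filter.Tendsto (fun N => max 0 (min d (P N) - c)) Filter.atTop
      (nhds (max 0 (min d 1 - c))) :=
    (Filter.Tendsto.max tendsto_const_nhds
      ((tendsto_const_nhds.min hlim).sub tendsto_const_nhds))
  rw [min_eq_left hd1, max_eq_right (by linarith)] at h1
  exact h1.congr fun N => (key N).symm

/-- **Lemma 3 (entropy under strong majorization).**
Let `p, q : ℕ → ℝ` be (finite-or-countable, sorted) probability distributions with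
finite entropy (expressed by summability of the entropy series), and let `α > 0`.
If `p ≼_α q`, i.e. for every index `i` there is `j` with
`∑_{k≤i} p k ≤ ∑_{k≤j} q k` and `α·p i ≤ q j`, then `H(q) ≤ H(p) − log₂ α`. -/
theorem entropy_le_of_strongly_majorized
    (p q : ℕ → ℝ) (α : ℝ) (hα : 0 < α)
    (hpsort : Antitone p) (hppos : ∀ i, 0 ≤ p i) (hpsum : HasSum p 1)
    (hqsort : Antitone q) (hqpos : ∀ i, 0 ≤ q i) (hqsum : HasSum q 1)
    (hpent : Summable fun i => p i * Real.logb 2 (p i)⁻¹)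
    (hqent : Summable fun i => q i * Real.logb 2 (q i)⁻¹)
    (hmaj : ∀ i : ℕ, ∃ j : ℕ,
      (∑ k ∈ Finset.range (i + 1), p k ≤ ∑ k ∈ Finset.range (j + 1), q k) ∧
      α * p i ≤ q j) :
    (∑' i : ℕ, q i * Real.logb 2 (q i)⁻¹) ≤
      (∑' i : ℕ, p i * Real.logb 2 (p i)⁻¹) - Real.logb 2 α := by
  classical
  set Pp : ℕ → ℝ := fun n => ∑ k ∈ Finset.range n, p k with hPp
  set Pq : ℕ → ℝ := fun n => ∑ k ∈ Finset.range n, q k with hPq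
  set m : ℕ → ℕ → ℝ :=
    fun i j => max 0 (min (Pp (i + 1)) (Pq (j + 1)) - max (Pp i) (Pq j)) with hm
  -- basic facts about partial sums
  have hPpmono : Monotone Pp := by
    intro a b hab
    exact Finset.sum_le_sum_of_subset_of_nonneg
      (Finset.range_subset_range.mpr hab) (fun k _ _ => hppos k)
  have hPqmono : Monotone Pq := by
    intro a b hab
    exact Finset.sum_le_sum_of_subset_of_nonneg
      (Finset.range_subset_range.mpr hab) (fun k _ _ => hqpos k)
  have hPp0 : Pp 0 = 0 := by simp [hPp]
  have hPq0 : Pq 0 = 0 := by simp [hPq]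
  have hPpnn : ∀ n, 0 ≤ Pp n := fun n => hPp0 ▸ hPpmono (Nat.zero_le n)
  have hPqnn : ∀ n, 0 ≤ Pq n := fun n => hPq0 ▸ hPqmono (Nat.zero_le n)
  have hPple : ∀ n, Pp n ≤ 1 := fun n =>
    sum_le_hasSum (Finset.range n) (fun k _ => hppos k) hpsum
  have hPqle : ∀ n, Pq n ≤ 1 := fun n =>
    sum_le_hasSum (Finset.range n) (fun k _ => hqpos k) hqsum
  have hPplim : Filter.Tendsto Pp Filter.atTop (nhds 1) := hpsum.tendsto_sum_nat
  have hPqlim : Filter.Tendsto Pq Filter.atTop (nhds 1) := hqsum.tendsto_sum_nat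
  have hPpstep : ∀ i, Pp (i + 1) - Pp i = p i := by
    intro i; simp [hPp, Finset.sum_range_succ]
  have hPqstep : ∀ j, Pq (j + 1) - Pq j = q j := by
    intro j; simp [hPq, Finset.sum_range_succ]
  have hq1 : ∀ j, q j ≤ 1 := fun j => le_hasSum hqsum j (fun k _ => hqpos k)
  -- row and column sums of m
  have HS1 : ∀ i, HasSum (fun j => m i j) (p i) := by
    intro i
    have := hasSum_slice Pq (Pp i) (Pp (i + 1)) hPq0 hPqmono hPqlim
      (hPpnn i) (hPpmono (Nat.le_succ i)) (hPple (i + 1))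
    rw [hPpstep i] at this
    exact this
  have HS2 : ∀ j, HasSum (fun i => m i j) (q j) := by
    intro j
    have h := hasSum_slice Pp (Pq j) (Pq (j + 1)) hPp0 hPpmono hPplim
      (hPqnn j) (hPqmono (Nat.le_succ j)) (hPqle (j + 1))
    rw [hPqstep j] at h
    have e : (fun i => max 0 (min (Pq (j + 1)) (Pp (i + 1)) - max (Pq j) (Pp i)))
        = fun i => m i j := by
      funext i
      simp only [hm]
      rw [min_comm (Pq (j + 1)) (Pp (i + 1)), max_comm (Pq j) (Pp i)]
    rwa [e] at h
  -- nonnegativity facts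
  have hmnn : ∀ i j, 0 ≤ m i j := fun i j => le_max_left _ _
  have hfq0 : ∀ j, 0 ≤ Real.logb 2 (q j)⁻¹ := by
    intro j
    rw [Real.logb_inv]
    have := Real.logb_nonpos (one_lt_two) (hqpos j) (hq1 j)
    linarith
  -- the key pointwise estimate
  have hkey : ∀ i j, m i j * Real.logb 2 (q j)⁻¹ ≤ m i j * Real.logb 2 (α * p i)⁻¹ := by
    intro i j
    rcases (hmnn i j).eq_or_lt with h | h
    · rw [← h, zero_mul, zero_mul]
    · have hlt : max (Pp i) (Pq j) < min (Pp (i + 1)) (Pq (j + 1)) := by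
        by_contra hcon
        push_neg at hcon
        have h0 : m i j = 0 := max_eq_left (sub_nonpos.mpr hcon)
        rw [h0] at h
        exact lt_irrefl _ h
      have hppos' : 0 < p i := by
        have h1 := le_max_left (Pp i) (Pq j)
        have h2 := min_le_left (Pp (i + 1)) (Pq (j + 1))
        have h3 := hPpstep i
        linarith
      obtain ⟨j', hj'sum, hj'val⟩ := hmaj i
      have hPqj : Pq j < Pq (j' + 1) := by
        have h1 := le_max_right (Pp i) (Pq j)
        have h2 := min_le_left (Pp (i + 1)) (Pq (j + 1))
        have h3 : Pp (i + 1) ≤ Pq (j' + 1) := hj'sum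
        linarith
      have hjle : j ≤ j' := by
        by_contra hcon
        push_neg at hcon
        exact absurd (hPqmono (Nat.succ_le_of_lt hcon)) (not_le.mpr hPqj)
      have hαq : α * p i ≤ q j := le_trans hj'val (hqsort hjle)
      have hαp : 0 < α * p i := mul_pos hα hppos'
      have hlog : Real.logb 2 (q j)⁻¹ ≤ Real.logb 2 (α * p i)⁻¹ := by
        rw [Real.logb_inv, Real.logb_inv, neg_le_neg_iff]
        exact Real.logb_le_logb_of_le one_lt_two hαp hαq
      exact mul_le_mul_of_nonneg_left hlog h.le
  -- summability of the double series
  have hgnn : (0 : ℕ × ℕ → ℝ) ≤ fun x : ℕ × ℕ => m x.2 x.1 * Real.logb 2 (q x.1)⁻¹ :=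
    fun x => mul_nonneg (hmnn _ _) (hfq0 _)
  have hg : Summable (fun x : ℕ × ℕ => m x.2 x.1 * Real.logb 2 (q x.1)⁻¹) := by
    rw [summable_prod_of_nonneg hgnn]
    constructor
    · intro j
      show Summable fun i => m i j * Real.logb 2 (q j)⁻¹
      exact ((HS2 j).summable.mul_right _)
    · show Summable fun j => ∑' i, m i j * Real.logb 2 (q j)⁻¹
      have e : (fun j => ∑' i, m i j * Real.logb 2 (q j)⁻¹)
          = fun j => q j * Real.logb 2 (q j)⁻¹ := by
        funext j
        rw [tsum_mul_right, (HS2 j).tsum_eq]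
      rw [e]
      exact hqent
  have hg' : Summable (fun x : ℕ × ℕ => m x.1 x.2 * Real.logb 2 (q x.2)⁻¹) := by
    have := (Equiv.prodComm ℕ ℕ).summable_iff.mpr hg
    simpa [Function.comp_def] using this
  have hg'nn : (0 : ℕ × ℕ → ℝ) ≤ fun x : ℕ × ℕ => m x.1 x.2 * Real.logb 2 (q x.2)⁻¹ :=
    fun x => mul_nonneg (hmnn _ _) (hfq0 _)
  have hmarg := (summable_prod_of_nonneg hg'nn).mp hg'
  -- the log-splitting identity
  have hlogsplit : ∀ i, p i * Real.logb 2 (α * p i)⁻¹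
      = p i * Real.logb 2 (p i)⁻¹ - p i * Real.logb 2 α := by
    intro i
    rcases (hppos i).eq_or_lt with h | h
    · rw [← h]; ring
    · rw [mul_inv, Real.logb_mul (by positivity) (by positivity), Real.logb_inv]
      ring
  -- summability of the right-hand side outer series
  have heR : (fun i => ∑' j, m i j * Real.logb 2 (α * p i)⁻¹)
      = fun i => p i * Real.logb 2 (p i)⁻¹ - p i * Real.logb 2 α := by
    funext i
    rw [tsum_mul_right, (HS1 i).tsum_eq, hlogsplit i]
  have hsummR : Summable fun i => ∑' j, m i j * Real.logb 2 (α * p i)⁻¹ := by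
    rw [heR]
    exact hpent.sub (hpsum.summable.mul_right _)
  -- main chain
  calc (∑' j : ℕ, q j * Real.logb 2 (q j)⁻¹)
      = ∑' j, ∑' i, m i j * Real.logb 2 (q j)⁻¹ := by
        refine tsum_congr fun j => ?_
        rw [tsum_mul_right, (HS2 j).tsum_eq]
    _ = ∑' i, ∑' j, m i j * Real.logb 2 (q j)⁻¹ := Summable.tsum_comm hg'
    _ ≤ ∑' i, ∑' j, m i j * Real.logb 2 (α * p i)⁻¹ := by
        refine Summable.tsum_le_tsum (fun i => ?_) hmarg.2 hsummR
        exact Summable.tsum_le_tsum (fun j => hkey i j) (hmarg.1 i) ((HS1 i).summable.mul_right _)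
    _ = ∑' i, (p i * Real.logb 2 (p i)⁻¹ - p i * Real.logb 2 α) := by rw [heR]
    _ = (∑' i, p i * Real.logb 2 (p i)⁻¹) - ∑' i, p i * Real.logb 2 α :=
        Summable.tsum_sub hpent (hpsum.summable.mul_right _)
    _ = (∑' i : ℕ, p i * Real.logb 2 (p i)⁻¹) - Real.logb 2 α := by
        rw [tsum_mul_right, hpsum.tsum_eq, one_mul]
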